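/- Let w_A(k, λ) := I_m - i j Π_k* S_k⁻¹ (A - λ I_n)⁻¹ Π_k (the transfer matrix function), with Π_k = [(I + i A⁻¹)^k ϑ₁, (I - i A⁻¹)^k ϑ₂], R_k = (I + i A⁻¹)^{-k} S_k (I - i (A*)⁻¹)^{-k}, Q_k = (I - i A⁻¹)^{-k} S_k (I + i (A*)⁻¹)^{-k}, G(A) = (I + i A⁻¹)⁻¹(I - i A⁻¹). Then for λ = -1/z the following block representation holds: w_A(k, -1/z) = I_m - i z j M where M is the 2×2 block matrix with blocks M₁₁ = ϑ₁* R_k⁻¹ (I + zA)⁻¹ ϑ₁, M₁₂ = ϑ₁* R_k⁻¹ (I + zA)⁻¹ G(A)^k ϑ₂, M₂₁ = ϑ₂* (G(A)^k)* R_k⁻¹ (I + zA)⁻¹ ϑ₁, M₂₂ = ϑ₂* Q_k⁻¹ (I + zA)⁻¹ ϑ₂. -/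

import Mathlib

open Matrix Complex
open scoped ComplexOrder

/-- Block representation (R2) of the transfer matrix w_A(k, -1/z). -/
theorem stmt11 (n m₁ m₂ : ℕ) (hn : 0 < n)
    (A : Matrix (Fin n) (Fin n) ℂ) (hA : IsUnit A.det)
    (hi : Complex.I ∉ spectrum ℂ A) (hmi : -Complex.I ∉ spectrum ℂ A)
    (θ₁ : Matrix (Fin n) (Fin m₁) ℂ) (θ₂ : Matrix (Fin n) (Fin m₂) ℂ)
    (J : Matrix (Fin m₁ ⊕ Fin m₂) (Fin m₁ ⊕ Fin m₂) ℂ)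
    (hJ : J = Matrix.fromBlocks 1 0 0 (-1))
    (P : ℕ → Matrix (Fin n) (Fin m₁ ⊕ Fin m₂) ℂ)
    (hPdef : ∀ r, P r = Matrix.fromCols ((1 + Complex.I • A⁻¹) ^ r * θ₁)
      ((1 - Complex.I • A⁻¹) ^ r * θ₂))
    (S : ℕ → Matrix (Fin n) (Fin n) ℂ) (hSpos : ∀ r, (S r).PosDef)
    (R Q : ℕ → Matrix (Fin n) (Fin n) ℂ)
    (hR : ∀ r, R r = ((1 + Complex.I • A⁻¹) ^ r)⁻¹ * S r *
      (((1 - Complex.I • Aᴴ⁻¹) ^ r)⁻¹))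
    (hQ : ∀ r, Q r = ((1 - Complex.I • A⁻¹) ^ r)⁻¹ * S r *
      (((1 + Complex.I • Aᴴ⁻¹) ^ r)⁻¹))
    (G : Matrix (Fin n) (Fin n) ℂ)
    (hG : G = (1 + Complex.I • A⁻¹)⁻¹ * (1 - Complex.I • A⁻¹))
    (z : ℂ) (hz : z ≠ 0) (hzA : IsUnit (1 + z • A).det) (k : ℕ) :
    1 - Complex.I • (J * (P k)ᴴ * (S k)⁻¹ * (A - (-1 / z) • 1)⁻¹ * P k) =
      1 - (Complex.I * z) • (J *
        Matrix.fromBlocks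
          (θ₁ᴴ * (R k)⁻¹ * (1 + z • A)⁻¹ * θ₁)
          (θ₁ᴴ * (R k)⁻¹ * (1 + z • A)⁻¹ * (G ^ k) * θ₂)
          (θ₂ᴴ * ((G ^ k)ᴴ) * (R k)⁻¹ * (1 + z • A)⁻¹ * θ₁)
          (θ₂ᴴ * (Q k)⁻¹ * (1 + z • A)⁻¹ * θ₂)) := by
  set U : Matrix (Fin n) (Fin n) ℂ := 1 + Complex.I • A⁻¹ with hUdef
  set V : Matrix (Fin n) (Fin n) ℂ := 1 - Complex.I • A⁻¹ with hVdef
  set W : Matrix (Fin n) (Fin n) ℂ := 1 + z • A with hWdef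
  -- invertibility of the basic pieces
  haveI iA : Invertible A := A.invertibleOfIsUnitDet hA
  haveI iAinv : Invertible A⁻¹ := by
    rw [← Matrix.invOf_eq_nonsing_inv]; infer_instance
  have hplus : IsUnit (A + Complex.I • (1 : Matrix (Fin n) (Fin n) ℂ)) := by
    rw [spectrum.notMem_iff] at hmi
    have : A + Complex.I • (1 : Matrix (Fin n) (Fin n) ℂ)
        = -(algebraMap ℂ (Matrix (Fin n) (Fin n) ℂ) (-Complex.I) - A) := by
      rw [Algebra.algebraMap_eq_smul_one]; simp [neg_smul]
    rw [this]; exact hmi.neg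
  have hminus : IsUnit (A - Complex.I • (1 : Matrix (Fin n) (Fin n) ℂ)) := by
    rw [spectrum.notMem_iff] at hi
    have : A - Complex.I • (1 : Matrix (Fin n) (Fin n) ℂ)
        = -(algebraMap ℂ (Matrix (Fin n) (Fin n) ℂ) Complex.I - A) := by
      rw [Algebra.algebraMap_eq_smul_one]; simp [neg_smul]
    rw [this]; exact hi.neg
  have hUeq : U = A⁻¹ * (A + Complex.I • 1) := by
    rw [hUdef, mul_add, Matrix.nonsing_inv_mul A hA, Matrix.mul_smul, mul_one]
  have hVeq : V = A⁻¹ * (A - Complex.I • 1) := by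
    rw [hVdef, mul_sub, Matrix.nonsing_inv_mul A hA, Matrix.mul_smul, mul_one]
  haveI iplus : Invertible (A + Complex.I • (1 : Matrix (Fin n) (Fin n) ℂ)) :=
    (A + Complex.I • 1).invertibleOfIsUnitDet
      ((Matrix.isUnit_iff_isUnit_det _).mp hplus)
  haveI iminus : Invertible (A - Complex.I • (1 : Matrix (Fin n) (Fin n) ℂ)) :=
    (A - Complex.I • 1).invertibleOfIsUnitDet
      ((Matrix.isUnit_iff_isUnit_det _).mp hminus)
  haveI iU : Invertible U := by rw [hUeq]; exact invertibleMul _ _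
  haveI iV : Invertible V := by rw [hVeq]; exact invertibleMul _ _
  haveI iW : Invertible W := W.invertibleOfIsUnitDet hzA
  haveI iUk : Invertible (U ^ k) := invertiblePow U k
  haveI iVk : Invertible (V ^ k) := invertiblePow V k
  haveI iS : Invertible (S k) := ((hSpos k).isUnit).invertible
  have hudet : IsUnit (U ^ k).det := Matrix.isUnit_det_of_invertible _
  have hvdet : IsUnit (V ^ k).det := Matrix.isUnit_det_of_invertible _
  have hudetH : IsUnit ((U ^ k)ᴴ).det := by
    rw [Matrix.det_conjTranspose]; exact hudet.star
  have hvdetH : IsUnit ((V ^ k)ᴴ).det := by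
    rw [Matrix.det_conjTranspose]; exact hvdet.star
  -- commutation facts
  have c0 : Commute A⁻¹ A := by
    rw [← Matrix.invOf_eq_nonsing_inv]; exact (Commute.refl A).invOf_left
  have cW : Commute A⁻¹ W := (Commute.one_right A⁻¹).add_right (c0.smul_right z)
  have cUW : Commute U W := (Commute.one_left W).add_left (cW.smul_left Complex.I)
  have cVW : Commute V W := (Commute.one_left W).sub_left (cW.smul_left Complex.I)
  have cUV : Commute U V :=
    ((Commute.one_right U).sub_right
      (((Commute.one_left (Complex.I • A⁻¹)).add_left (Commute.refl _))))
  have hcuw : (U ^ k) * W⁻¹ = W⁻¹ * (U ^ k) := by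
    rw [← Matrix.invOf_eq_nonsing_inv]
    exact ((cUW.pow_left k).invOf_right).eq
  have hcvw : (V ^ k) * W⁻¹ = W⁻¹ * (V ^ k) := by
    rw [← Matrix.invOf_eq_nonsing_inv]
    exact ((cVW.pow_left k).invOf_right).eq
  -- conjugate transposes
  have hUH : (1 : Matrix (Fin n) (Fin n) ℂ) - Complex.I • Aᴴ⁻¹ = Uᴴ := by
    rw [hUdef, conjTranspose_add, conjTranspose_one, conjTranspose_smul,
      Matrix.conjTranspose_nonsing_inv, Complex.star_def, Complex.conj_I,
      neg_smul, ← sub_eq_add_neg]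
  have hVH : (1 : Matrix (Fin n) (Fin n) ℂ) + Complex.I • Aᴴ⁻¹ = Vᴴ := by
    rw [hVdef, conjTranspose_sub, conjTranspose_one, conjTranspose_smul,
      Matrix.conjTranspose_nonsing_inv, Complex.star_def, Complex.conj_I,
      neg_smul, sub_neg_eq_add]
  -- inverses of R and Q
  have hRinv : (R k)⁻¹ = (U ^ k)ᴴ * (S k)⁻¹ * (U ^ k) := by
    rw [hR k, hUH, ← conjTranspose_pow, Matrix.mul_inv_rev, Matrix.mul_inv_rev,
      Matrix.nonsing_inv_nonsing_inv _ hudetH, Matrix.nonsing_inv_nonsing_inv _ hudet,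
      mul_assoc]
  have hQinv : (Q k)⁻¹ = (V ^ k)ᴴ * (S k)⁻¹ * (V ^ k) := by
    rw [hQ k, hVH, ← conjTranspose_pow, Matrix.mul_inv_rev, Matrix.mul_inv_rev,
      Matrix.nonsing_inv_nonsing_inv _ hvdetH, Matrix.nonsing_inv_nonsing_inv _ hvdet,
      mul_assoc]
  -- G ^ k
  have hGk : G ^ k = (U ^ k)⁻¹ * V ^ k := by
    rw [hG]
    calc (U⁻¹ * V) ^ k = (⅟U * V) ^ k := by rw [Matrix.invOf_eq_nonsing_inv]
      _ = (⅟U) ^ k * V ^ k := (cUV.invOf_left).mul_pow k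
      _ = ⅟(U ^ k) * V ^ k := by rw [invOf_pow]
      _ = (U ^ k)⁻¹ * V ^ k := by rw [Matrix.invOf_eq_nonsing_inv]
  have hGkH : (G ^ k)ᴴ = (V ^ k)ᴴ * ((U ^ k)ᴴ)⁻¹ := by
    rw [hGk, conjTranspose_mul, Matrix.conjTranspose_nonsing_inv]
  -- the resolvent identity
  have hres : (A - (-1 / z) • (1 : Matrix (Fin n) (Fin n) ℂ))⁻¹ = z • W⁻¹ := by
    apply Matrix.inv_eq_right_inv
    have hAz : A - (-1 / z) • (1 : Matrix (Fin n) (Fin n) ℂ) = z⁻¹ • W := by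
      rw [hWdef, smul_add, smul_smul, inv_mul_cancel₀ hz, one_smul, neg_div,
        neg_smul, sub_neg_eq_add, one_div, add_comm]
    rw [hAz, Matrix.smul_mul, Matrix.mul_smul, smul_smul, inv_mul_cancel₀ hz,
      one_smul, Matrix.mul_nonsing_inv _ hzA]
  -- square-matrix block identities
  have E1 : (U ^ k)ᴴ * (S k)⁻¹ * W⁻¹ * (U ^ k) = (R k)⁻¹ * W⁻¹ := by
    rw [hRinv, mul_assoc ((U ^ k)ᴴ * (S k)⁻¹), ← hcuw, ← mul_assoc]
  have E4 : (V ^ k)ᴴ * (S k)⁻¹ * W⁻¹ * (V ^ k) = (Q k)⁻¹ * W⁻¹ := by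
    rw [hQinv, mul_assoc ((V ^ k)ᴴ * (S k)⁻¹), ← hcvw, ← mul_assoc]
  have E2 : (U ^ k)ᴴ * (S k)⁻¹ * W⁻¹ * (V ^ k) = (R k)⁻¹ * W⁻¹ * (G ^ k) := by
    rw [hRinv, hGk]
    simp only [mul_assoc]
    rw [← mul_assoc (U ^ k) W⁻¹, hcuw, mul_assoc W⁻¹ (U ^ k),
      ← mul_assoc (U ^ k) ((U ^ k)⁻¹), Matrix.mul_nonsing_inv _ hudet, one_mul]
  have E3 : (V ^ k)ᴴ * (S k)⁻¹ * W⁻¹ * (U ^ k) = (G ^ k)ᴴ * (R k)⁻¹ * W⁻¹ := by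
    rw [hGkH, hRinv]
    simp only [mul_assoc]
    rw [← mul_assoc ((U ^ k)ᴴ)⁻¹ ((U ^ k)ᴴ), Matrix.nonsing_inv_mul _ hudetH,
      one_mul, hcuw]
  -- θ-versions (right-associated)
  have E1θ : (U ^ k)ᴴ * ((S k)⁻¹ * (W⁻¹ * (U ^ k * θ₁))) = (R k)⁻¹ * (W⁻¹ * θ₁) := by
    have := congrArg (· * θ₁) E1; simpa only [Matrix.mul_assoc] using this
  have E2θ : (U ^ k)ᴴ * ((S k)⁻¹ * (W⁻¹ * (V ^ k * θ₂)))
      = (R k)⁻¹ * (W⁻¹ * (G ^ k * θ₂)) := by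
    have := congrArg (· * θ₂) E2; simpa only [Matrix.mul_assoc] using this
  have E3θ : (V ^ k)ᴴ * ((S k)⁻¹ * (W⁻¹ * (U ^ k * θ₁)))
      = (G ^ k)ᴴ * ((R k)⁻¹ * (W⁻¹ * θ₁)) := by
    have := congrArg (· * θ₁) E3; simpa only [Matrix.mul_assoc] using this
  have E4θ : (V ^ k)ᴴ * ((S k)⁻¹ * (W⁻¹ * (V ^ k * θ₂))) = (Q k)⁻¹ * (W⁻¹ * θ₂) := by
    have := congrArg (· * θ₂) E4; simpa only [Matrix.mul_assoc] using this
  -- main reduction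
  have key : (P k)ᴴ * (S k)⁻¹ * (A - (-1 / z) • 1)⁻¹ * P k
      = z • Matrix.fromBlocks
          (θ₁ᴴ * (R k)⁻¹ * (W⁻¹) * θ₁)
          (θ₁ᴴ * (R k)⁻¹ * (W⁻¹) * (G ^ k) * θ₂)
          (θ₂ᴴ * ((G ^ k)ᴴ) * (R k)⁻¹ * (W⁻¹) * θ₁)
          (θ₂ᴴ * (Q k)⁻¹ * (W⁻¹) * θ₂) := by
    rw [hres, hPdef k, Matrix.mul_smul, Matrix.smul_mul]
    congr 1
    rw [Matrix.conjTranspose_fromCols_eq_fromRows_conjTranspose]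
    simp only [Matrix.conjTranspose_mul, Matrix.fromRows_mul,
      Matrix.mul_fromCols, Matrix.mul_assoc,
      Matrix.fromRows_fromCols_eq_fromBlocks]
    rw [E1θ, E2θ, E3θ, E4θ, Matrix.fromCols_fromRows_eq_fromBlocks]
  have hfinal : J * (P k)ᴴ * (S k)⁻¹ * (A - (-1 / z) • 1)⁻¹ * P k
      = z • (J * Matrix.fromBlocks
          (θ₁ᴴ * (R k)⁻¹ * (W⁻¹) * θ₁)
          (θ₁ᴴ * (R k)⁻¹ * (W⁻¹) * (G ^ k) * θ₂)
          (θ₂ᴴ * ((G ^ k)ᴴ) * (R k)⁻¹ * (W⁻¹) * θ₁)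
          (θ₂ᴴ * (Q k)⁻¹ * (W⁻¹) * θ₂)) := by
    calc J * (P k)ᴴ * (S k)⁻¹ * (A - (-1 / z) • 1)⁻¹ * P k
        = J * ((P k)ᴴ * (S k)⁻¹ * (A - (-1 / z) • 1)⁻¹ * P k) := by
          simp only [Matrix.mul_assoc]
      _ = _ := by rw [key, mul_smul_comm]
  rw [hfinal, smul_smul]
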